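/- Let m ≥ 0 and for each l ∈ {1,…,m} let S_l be a nonempty compact subset of ℝ^{n×n} closed under negation (W ∈ S_l implies −W ∈ S_l), and let S_0 be a nonempty compact subset of ℝ^{1×n} closed under negation. Let U_0 ∈ ℝ^{1×n} and U_l ∈ ℝ^{n×n} for l ∈ {1,…,m}. For l ∈ {1,…,m} define T_l(W) = U_0 (∏_{j=1}^{l−1} U_j) W (∏_{j=l+1}^{m} U_j) and T_0(x) = x ∏_{l=1}^m U_l. Then max over choices x_l ∈ S_l (0 ≤ l ≤ m) of ‖∏_{l=0}^m (x_l + U_l)‖_2² is at least ‖∏_{l=0}^m U_l‖_2² + Σ_{l=0}^m max_{x ∈ S_l} ‖T_l(x)‖_2². -/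

import Mathlib

/-- Squared Euclidean norm of a `1 × n` row vector (as a matrix). -/
def rowNormSq {n : ℕ} (X : Matrix (Fin 1) (Fin n) ℝ) : ℝ := ∑ j, (X 0 j) ^ 2

lemma rowNormSq_nonneg {n : ℕ} (X : Matrix (Fin 1) (Fin n) ℝ) : 0 ≤ rowNormSq X :=
  Finset.sum_nonneg fun _ _ => sq_nonneg _

lemma para {n : ℕ} (a b : Matrix (Fin 1) (Fin n) ℝ) :
    rowNormSq (a + b) + rowNormSq (-a + b) = 2 * (rowNormSq a + rowNormSq b) := by
  simp only [rowNormSq, Matrix.add_apply, Matrix.neg_apply, Finset.mul_sum,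
    ← Finset.sum_add_distrib]
  exact Finset.sum_congr rfl fun _ _ => by ring

def negIf {α : Type*} [Neg α] (b : Bool) (x : α) : α := if b then x else -x

lemma sum_bool_para {n k : ℕ} (a b : Matrix (Fin 1) (Fin k) ℝ)
    (R : Matrix (Fin k) (Fin n) ℝ) :
    ∑ s : Bool, rowNormSq ((negIf s a + b) * R)
      = 2 * (rowNormSq (a * R) + rowNormSq (b * R)) := by
  rw [Fintype.sum_bool]
  have h1 : negIf true a = a := rfl
  have h2 : negIf false a = -a := rfl
  rw [h1, h2, Matrix.add_mul, Matrix.add_mul, Matrix.neg_mul]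
  exact para (a * R) (b * R)

lemma mul_negIf {n k p : ℕ} (v : Matrix (Fin n) (Fin k) ℝ) (b : Bool)
    (X : Matrix (Fin k) (Fin p) ℝ) : v * negIf b X = negIf b (v * X) := by
  cases b
  · simp [negIf, Matrix.mul_neg]
  · simp [negIf]

lemma key {n : ℕ} : ∀ (m : ℕ) (v : Matrix (Fin 1) (Fin n) ℝ)
    (x U : Fin m → Matrix (Fin n) (Fin n) ℝ),
    2 ^ m * (rowNormSq (v * (List.ofFn U).prod)
      + ∑ l : Fin m, rowNormSq (v * ((List.ofFn U).take (l : ℕ)).prod * x l *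
          ((List.ofFn U).drop ((l : ℕ) + 1)).prod))
    ≤ ∑ ε : Fin m → Bool, rowNormSq (v * (List.ofFn fun l => negIf (ε l) (x l) + U l).prod)
  | 0, v, x, U => by
    simp [List.ofFn_zero]
  | (m + 1), v, x, U => by
    set xs : Fin m → Matrix (Fin n) (Fin n) ℝ := fun i => x i.succ with hxs
    set Us : Fin m → Matrix (Fin n) (Fin n) ℝ := fun i => U i.succ with hUs
    have hx := key m (v * x 0) xs Us
    have hU := key m (v * U 0) xs Us
    have hx' : 2 ^ m * rowNormSq ((v * x 0) * (List.ofFn Us).prod)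
        ≤ ∑ ε : Fin m → Bool,
            rowNormSq ((v * x 0) * (List.ofFn fun l => negIf (ε l) (xs l) + Us l).prod) := by
      refine le_trans ?_ hx
      have h0 : (0:ℝ) ≤ ∑ l : Fin m, rowNormSq ((v * x 0) * ((List.ofFn Us).take (l:ℕ)).prod
          * xs l * ((List.ofFn Us).drop ((l:ℕ)+1)).prod) :=
        Finset.sum_nonneg fun _ _ => rowNormSq_nonneg _
      nlinarith [pow_pos (zero_lt_two (α := ℝ)) m]
    -- transform the RHS sum
    have hsum : (∑ ε : Fin (m+1) → Bool,
          rowNormSq (v * (List.ofFn fun l => negIf (ε l) (x l) + U l).prod))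
        = ∑ ε : Fin m → Bool, 2 *
            (rowNormSq ((v * x 0) * (List.ofFn fun l => negIf (ε l) (xs l) + Us l).prod)
            + rowNormSq ((v * U 0) * (List.ofFn fun l => negIf (ε l) (xs l) + Us l).prod)) := by
      rw [← Equiv.sum_comp (Fin.consEquiv fun _ : Fin (m+1) => Bool)
        (fun ε => rowNormSq (v * (List.ofFn fun l => negIf (ε l) (x l) + U l).prod)),
        Fintype.sum_prod_type, Finset.sum_comm]
      refine Finset.sum_congr rfl fun ε' _ => ?_
      have hterm : ∀ b : Bool,
          rowNormSq (v * (List.ofFn fun l =>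
              negIf ((Fin.consEquiv fun _ : Fin (m+1) => Bool) (b, ε') l) (x l) + U l).prod)
          = rowNormSq ((negIf b (v * x 0) + v * U 0) *
              (List.ofFn fun l => negIf (ε' l) (xs l) + Us l).prod) := by
        intro b
        congr 1
        rw [List.ofFn_succ, List.prod_cons, ← Matrix.mul_assoc]
        have h1 : (Fin.consEquiv fun _ : Fin (m+1) => Bool) (b, ε') 0 = b := rfl
        have h2 : ∀ i : Fin m,
            (Fin.consEquiv fun _ : Fin (m+1) => Bool) (b, ε') i.succ = ε' i :=
          fun i => rfl
        rw [h1, Matrix.mul_add, mul_negIf]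
        have h3 : (fun i : Fin m => negIf ((Fin.consEquiv fun _ : Fin (m+1) => Bool)
              (b, ε') i.succ) (x i.succ) + U i.succ)
            = fun l => negIf (ε' l) (xs l) + Us l := by
          funext i; rw [h2]
        rw [h3]
      calc ∑ b : Bool, rowNormSq (v * (List.ofFn fun l =>
              negIf ((Fin.consEquiv fun _ : Fin (m+1) => Bool) (b, ε') l) (x l) + U l).prod)
          = ∑ b : Bool, rowNormSq ((negIf b (v * x 0) + v * U 0) *
              (List.ofFn fun l => negIf (ε' l) (xs l) + Us l).prod) :=
            Finset.sum_congr rfl fun b _ => hterm b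
        _ = 2 * (rowNormSq ((v * x 0) * (List.ofFn fun l => negIf (ε' l) (xs l) + Us l).prod)
            + rowNormSq ((v * U 0) * (List.ofFn fun l => negIf (ε' l) (xs l) + Us l).prod)) :=
            sum_bool_para _ _ _
    rw [hsum]
    -- rewrite the LHS
    have hL : rowNormSq (v * (List.ofFn U).prod)
        = rowNormSq ((v * U 0) * (List.ofFn Us).prod) := by
      rw [List.ofFn_succ, List.prod_cons, ← Matrix.mul_assoc]
    have hT : (∑ l : Fin (m+1), rowNormSq (v * ((List.ofFn U).take (l : ℕ)).prod * x l *
          ((List.ofFn U).drop ((l : ℕ) + 1)).prod))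
        = rowNormSq ((v * x 0) * (List.ofFn Us).prod)
          + ∑ l : Fin m, rowNormSq ((v * U 0) * ((List.ofFn Us).take (l : ℕ)).prod * xs l *
              ((List.ofFn Us).drop ((l : ℕ) + 1)).prod) := by
      rw [Fin.sum_univ_succ]
      congr 1
      · rw [List.ofFn_succ]
        simp [Matrix.mul_one, Matrix.mul_assoc, hUs]
      · refine Finset.sum_congr rfl fun j _ => ?_
        congr 1
        rw [List.ofFn_succ]
        have : ((j.succ : Fin (m+1)) : ℕ) = (j : ℕ) + 1 := rfl
        rw [this, List.take_succ_cons, List.prod_cons, List.drop_succ_cons,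
          ← Matrix.mul_assoc]
    rw [hL, hT]
    have hR : (∑ ε : Fin m → Bool, 2 *
          (rowNormSq ((v * x 0) * (List.ofFn fun l => negIf (ε l) (xs l) + Us l).prod)
          + rowNormSq ((v * U 0) * (List.ofFn fun l => negIf (ε l) (xs l) + Us l).prod)))
        = 2 * ((∑ ε : Fin m → Bool,
            rowNormSq ((v * x 0) * (List.ofFn fun l => negIf (ε l) (xs l) + Us l).prod))
          + ∑ ε : Fin m → Bool,
            rowNormSq ((v * U 0) * (List.ofFn fun l => negIf (ε l) (xs l) + Us l).prod)) := by
      rw [← Finset.mul_sum, Finset.sum_add_distrib]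
    rw [hR]
    have hexp : (2:ℝ) ^ (m+1) * (rowNormSq ((v * U 0) * (List.ofFn Us).prod)
        + (rowNormSq ((v * x 0) * (List.ofFn Us).prod)
          + ∑ l : Fin m, rowNormSq ((v * U 0) * ((List.ofFn Us).take (l : ℕ)).prod * xs l *
              ((List.ofFn Us).drop ((l : ℕ) + 1)).prod)))
        = 2 * (2 ^ m * rowNormSq ((v * x 0) * (List.ofFn Us).prod))
          + 2 * (2 ^ m * (rowNormSq ((v * U 0) * (List.ofFn Us).prod)
            + ∑ l : Fin m, rowNormSq ((v * U 0) * ((List.ofFn Us).take (l : ℕ)).prod * xs l *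
              ((List.ofFn Us).drop ((l : ℕ) + 1)).prod))) := by
      ring
    rw [hexp]
    linarith [hx', hU]
lemma cont_rowNormSq {n : ℕ} : Continuous (rowNormSq (n := n)) := by
  unfold rowNormSq
  refine continuous_finset_sum _ fun j _ => ?_
  exact ((continuous_apply j).comp (continuous_apply (0 : Fin 1))).pow 2

lemma cont_prod {n : ℕ} {α : Type*} [TopologicalSpace α] :
    ∀ (m : ℕ) (f : α → Fin m → Matrix (Fin n) (Fin n) ℝ),
    (∀ l, Continuous fun a => f a l) → Continuous fun a => (List.ofFn (f a)).prod
  | 0, f, _ => by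
    simp only [List.ofFn_zero, List.prod_nil]; exact continuous_const
  | (m+1), f, hf => by
    have h : (fun a => (List.ofFn (f a)).prod)
        = fun a => f a 0 * (List.ofFn fun i => f a i.succ).prod := by
      funext a; rw [List.ofFn_succ, List.prod_cons]
    rw [h]
    exact Continuous.matrix_mul (hf 0)
      (cont_prod m (fun a i => f a i.succ) fun i => hf i.succ)

lemma attain {α : Type*} [TopologicalSpace α] {S : Set α} (hc : IsCompact S)
    (hne : S.Nonempty) {f : α → ℝ} (hf : Continuous f) :
    ∃ a ∈ S, (∀ y ∈ S, f y ≤ f a) ∧ sSup {r | ∃ x ∈ S, r = f x} = f a := by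
  obtain ⟨a, haS, ha⟩ := hc.exists_isMaxOn hne hf.continuousOn
  refine ⟨a, haS, ha, ?_⟩
  have hset : {r | ∃ x ∈ S, r = f x} = f '' S := by
    ext r; simp only [Set.mem_setOf_eq, Set.mem_image, eq_comm]
  rw [hset]
  exact IsGreatest.csSup_eq ⟨⟨a, haS, rfl⟩, fun r hr => by
    obtain ⟨y, hy, rfl⟩ := hr; exact ha hy⟩

theorem stmt_6 (n m : ℕ)
    (S0 : Set (Matrix (Fin 1) (Fin n) ℝ)) (S : Fin m → Set (Matrix (Fin n) (Fin n) ℝ))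
    (hS0ne : S0.Nonempty) (hS0c : IsCompact S0) (hS0neg : ∀ x ∈ S0, -x ∈ S0)
    (hSne : ∀ l, (S l).Nonempty) (hSc : ∀ l, IsCompact (S l))
    (hSneg : ∀ l, ∀ W ∈ S l, -W ∈ S l)
    (U0 : Matrix (Fin 1) (Fin n) ℝ) (U : Fin m → Matrix (Fin n) (Fin n) ℝ) :
    rowNormSq (U0 * (List.ofFn U).prod)
      + sSup {r : ℝ | ∃ x0 ∈ S0, r = rowNormSq (x0 * (List.ofFn U).prod)}
      + ∑ l : Fin m, sSup {r : ℝ | ∃ W ∈ S l,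
          r = rowNormSq (U0 * ((List.ofFn U).take (l : ℕ)).prod * W *
                ((List.ofFn U).drop ((l : ℕ) + 1)).prod)}
    ≤ sSup {r : ℝ | ∃ x0 ∈ S0, ∃ x : Fin m → Matrix (Fin n) (Fin n) ℝ,
        (∀ l, x l ∈ S l) ∧
        r = rowNormSq ((x0 + U0) * (List.ofFn fun l => x l + U l).prod)} := by
  -- maximizers
  obtain ⟨x0s, hx0S, hx0max, hB⟩ := attain
    (f := fun x0 : Matrix (Fin 1) (Fin n) ℝ => rowNormSq (x0 * (List.ofFn U).prod))
    hS0c hS0ne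
    (by exact cont_rowNormSq.comp (Continuous.matrix_mul continuous_id continuous_const))
  have hWl : ∀ l : Fin m, ∃ W ∈ S l, (∀ y ∈ S l,
      rowNormSq (U0 * ((List.ofFn U).take (l : ℕ)).prod * y *
        ((List.ofFn U).drop ((l : ℕ) + 1)).prod)
      ≤ rowNormSq (U0 * ((List.ofFn U).take (l : ℕ)).prod * W *
        ((List.ofFn U).drop ((l : ℕ) + 1)).prod)) ∧
      sSup {r : ℝ | ∃ W ∈ S l, r = rowNormSq (U0 * ((List.ofFn U).take (l : ℕ)).prod * W *
        ((List.ofFn U).drop ((l : ℕ) + 1)).prod)}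
      = rowNormSq (U0 * ((List.ofFn U).take (l : ℕ)).prod * W *
        ((List.ofFn U).drop ((l : ℕ) + 1)).prod) := by
    intro l
    exact attain (hSc l) (hSne l)
      (f := fun W => rowNormSq (U0 * ((List.ofFn U).take (l : ℕ)).prod * W *
        ((List.ofFn U).drop ((l : ℕ) + 1)).prod))
      (by exact cont_rowNormSq.comp ((Continuous.matrix_mul continuous_const continuous_id).matrix_mul
        continuous_const))
  choose W hWS hWmax hC using hWl
  rw [hB]
  have hCsum : (∑ l : Fin m, sSup {r : ℝ | ∃ W ∈ S l,
      r = rowNormSq (U0 * ((List.ofFn U).take (l : ℕ)).prod * W *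
        ((List.ofFn U).drop ((l : ℕ) + 1)).prod)})
      = ∑ l : Fin m, rowNormSq (U0 * ((List.ofFn U).take (l : ℕ)).prod * W l *
        ((List.ofFn U).drop ((l : ℕ) + 1)).prod) :=
    Finset.sum_congr rfl fun l _ => hC l
  rw [hCsum]
  -- boundedness of the target set
  set T : Set ℝ := {r : ℝ | ∃ x0 ∈ S0, ∃ x : Fin m → Matrix (Fin n) (Fin n) ℝ,
      (∀ l, x l ∈ S l) ∧
      r = rowNormSq ((x0 + U0) * (List.ofFn fun l => x l + U l).prod)} with hT
  have hcont : Continuous fun p : Matrix (Fin 1) (Fin n) ℝ ×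
      (Fin m → Matrix (Fin n) (Fin n) ℝ) =>
      rowNormSq ((p.1 + U0) * (List.ofFn fun l => p.2 l + U l).prod) := by
    refine cont_rowNormSq.comp (Continuous.matrix_mul
      ((continuous_fst : Continuous (Prod.fst : Matrix (Fin 1) (Fin n) ℝ ×
        (Fin m → Matrix (Fin n) (Fin n) ℝ) → Matrix (Fin 1) (Fin n) ℝ)).add
        continuous_const) ?_)
    have hsnd : ∀ l : Fin m, Continuous fun p : Matrix (Fin 1) (Fin n) ℝ ×
        (Fin m → Matrix (Fin n) (Fin n) ℝ) => p.2 l + U l :=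
      fun l => ((continuous_apply l).comp continuous_snd).add continuous_const
    exact cont_prod (α := Matrix (Fin 1) (Fin n) ℝ × (Fin m → Matrix (Fin n) (Fin n) ℝ))
      m (fun p l => p.2 l + U l) hsnd
  have hTim : T = (fun p : Matrix (Fin 1) (Fin n) ℝ ×
      (Fin m → Matrix (Fin n) (Fin n) ℝ) =>
      rowNormSq ((p.1 + U0) * (List.ofFn fun l => p.2 l + U l).prod)) ''
      (S0 ×ˢ Set.univ.pi S) := by
    ext r
    constructor
    · rintro ⟨x0, hx0, x, hx, rfl⟩
      exact ⟨(x0, x), ⟨hx0, fun l _ => hx l⟩, rfl⟩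
    · rintro ⟨⟨x0, x⟩, ⟨hx0, hx⟩, rfl⟩
      exact ⟨x0, hx0, x, fun l => hx l (Set.mem_univ l), rfl⟩
  have hbdd : BddAbove T := by
    rw [hTim]
    exact ((hS0c.prod (isCompact_univ_pi hSc)).image hcont).bddAbove
  -- averaging argument
  set val : Bool × (Fin m → Bool) → ℝ := fun p =>
    rowNormSq ((negIf p.1 x0s + U0) * (List.ofFn fun l => negIf (p.2 l) (W l) + U l).prod)
    with hval
  have hkeyx := key m x0s W U
  have hkeyU := key m U0 W U
  have hx0' : 2 ^ m * rowNormSq (x0s * (List.ofFn U).prod)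
      ≤ ∑ ε : Fin m → Bool,
        rowNormSq (x0s * (List.ofFn fun l => negIf (ε l) (W l) + U l).prod) := by
    refine le_trans ?_ hkeyx
    have h0 : (0:ℝ) ≤ ∑ l : Fin m, rowNormSq (x0s * ((List.ofFn U).take (l:ℕ)).prod * W l *
        ((List.ofFn U).drop ((l:ℕ)+1)).prod) :=
      Finset.sum_nonneg fun _ _ => rowNormSq_nonneg _
    nlinarith [pow_pos (zero_lt_two (α := ℝ)) m]
  have hsumval : 2 ^ (m+1) * (rowNormSq (U0 * (List.ofFn U).prod)
      + rowNormSq (x0s * (List.ofFn U).prod)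
      + ∑ l : Fin m, rowNormSq (U0 * ((List.ofFn U).take (l : ℕ)).prod * W l *
        ((List.ofFn U).drop ((l : ℕ) + 1)).prod))
      ≤ ∑ p : Bool × (Fin m → Bool), val p := by
    have h1 : (∑ p : Bool × (Fin m → Bool), val p)
        = ∑ ε : Fin m → Bool, ∑ b : Bool,
          rowNormSq ((negIf b x0s + U0) *
            (List.ofFn fun l => negIf (ε l) (W l) + U l).prod) := by
      rw [Fintype.sum_prod_type, Finset.sum_comm]
    have h2 : (∑ ε : Fin m → Bool, ∑ b : Bool,
          rowNormSq ((negIf b x0s + U0) *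
            (List.ofFn fun l => negIf (ε l) (W l) + U l).prod))
        = ∑ ε : Fin m → Bool, 2 *
          (rowNormSq (x0s * (List.ofFn fun l => negIf (ε l) (W l) + U l).prod)
          + rowNormSq (U0 * (List.ofFn fun l => negIf (ε l) (W l) + U l).prod)) :=
      Finset.sum_congr rfl fun ε _ => sum_bool_para _ _ _
    have h3 : (∑ ε : Fin m → Bool, 2 *
          (rowNormSq (x0s * (List.ofFn fun l => negIf (ε l) (W l) + U l).prod)
          + rowNormSq (U0 * (List.ofFn fun l => negIf (ε l) (W l) + U l).prod)))
        = 2 * ((∑ ε : Fin m → Bool,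
            rowNormSq (x0s * (List.ofFn fun l => negIf (ε l) (W l) + U l).prod))
          + ∑ ε : Fin m → Bool,
            rowNormSq (U0 * (List.ofFn fun l => negIf (ε l) (W l) + U l).prod)) := by
      rw [← Finset.mul_sum, Finset.sum_add_distrib]
    rw [h1, h2, h3]
    have hexp : (2:ℝ) ^ (m+1) * (rowNormSq (U0 * (List.ofFn U).prod)
        + rowNormSq (x0s * (List.ofFn U).prod)
        + ∑ l : Fin m, rowNormSq (U0 * ((List.ofFn U).take (l : ℕ)).prod * W l *
          ((List.ofFn U).drop ((l : ℕ) + 1)).prod))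
        = 2 * (2 ^ m * rowNormSq (x0s * (List.ofFn U).prod))
          + 2 * (2 ^ m * (rowNormSq (U0 * (List.ofFn U).prod)
            + ∑ l : Fin m, rowNormSq (U0 * ((List.ofFn U).take (l : ℕ)).prod * W l *
              ((List.ofFn U).drop ((l : ℕ) + 1)).prod))) := by ring
    rw [hexp]
    linarith [hx0', hkeyU]
  -- extract a good sign choice
  have hcard : ((Finset.univ : Finset (Bool × (Fin m → Bool))).card : ℝ) = 2 ^ (m+1) := by
    simp [Finset.card_univ, Fintype.card_fun]
    ring
  obtain ⟨p, -, hp⟩ := Finset.exists_le_of_sum_le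
    (Finset.univ_nonempty (α := Bool × (Fin m → Bool)))
    (f := fun _ => rowNormSq (U0 * (List.ofFn U).prod)
      + rowNormSq (x0s * (List.ofFn U).prod)
      + ∑ l : Fin m, rowNormSq (U0 * ((List.ofFn U).take (l : ℕ)).prod * W l *
        ((List.ofFn U).drop ((l : ℕ) + 1)).prod)) (g := val)
    (by
      rw [Finset.sum_const, nsmul_eq_mul, hcard]
      exact hsumval)
  -- the chosen value lies in T
  have hmem : val p ∈ T := by
    refine ⟨negIf p.1 x0s, ?_, fun l => negIf (p.2 l) (W l), fun l => ?_, rfl⟩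
    · show negIf p.1 x0s ∈ S0
      cases hb : p.1
      · simpa [negIf] using hS0neg _ hx0S
      · simpa [negIf] using hx0S
    · show negIf (p.2 l) (W l) ∈ S l
      cases hb : p.2 l
      · simpa [negIf] using hSneg l _ (hWS l)
      · simpa [negIf] using hWS l
  exact le_trans hp (le_csSup hbdd hmem)
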